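/- Let G be a closed subgroup of Sym(Ω) acting without fixed points. If G has no algebraicity and weakly eliminates imaginaries, then for every open subgroup V ≤ G there exists a unique finite subset A ⊆ Ω such that G_A ≤ V ≤ G_{{A}}, where G_A is the pointwise and G_{{A}} the setwise stabilizer of A. -/

import Mathlib

open Topology

/-- The topology of pointwise convergence on the permutation group of a (discrete) set. -/
noncomputable def permTopology (Ω : Type*) : TopologicalSpace (Equiv.Perm Ω) :=
  letI : TopologicalSpace Ω := ⊥
  TopologicalSpace.induced
    (fun g => ((g : Ω → Ω), ((g⁻¹ : Equiv.Perm Ω) : Ω → Ω))) inferInstance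

/-- The subgroup of permutations fixing every point of a finite set `A`. -/
def fixSubgroup {Ω : Type*} (A : Finset Ω) : Subgroup (Equiv.Perm Ω) where
  carrier := {g | ∀ a ∈ A, g a = a}
  one_mem' := by intro a _; simp
  mul_mem' := by
    intro g h hg hh a ha
    simp [Equiv.Perm.mul_apply, hh a ha, hg a ha]
  inv_mem' := by
    intro g hg a ha
    have h1 := hg a ha
    calc (g⁻¹ : Equiv.Perm Ω) a = g⁻¹ (g a) := by rw [h1]
    _ = a := g.symm_apply_apply a

/-- The subgroup of permutations stabilizing a finite set `A` setwise. -/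
def setwiseStab {Ω : Type*} (A : Finset Ω) : Subgroup (Equiv.Perm Ω) where
  carrier := {g | ∀ a : Ω, a ∈ A ↔ g a ∈ A}
  one_mem' := by intro a; simp
  mul_mem' := by
    intro g h hg hh a
    rw [hh a, hg (h a)]
    simp [Equiv.Perm.mul_apply]
  inv_mem' := by
    intro g hg a
    have := hg ((g⁻¹ : Equiv.Perm Ω) a)
    rw [show g ((g⁻¹ : Equiv.Perm Ω) a) = a from g.apply_symm_apply a] at this
    exact this.symm


/-- If `H ≤ V` with finite index and `H` fixes `a`, then the `V`-orbit of `a` is finite. -/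
lemma orbit_finite_of_relindex_ne_zero {Ω : Type*} (V H : Subgroup (Equiv.Perm Ω))
    (hind : H.relIndex V ≠ 0) (a : Ω) (ha : ∀ h ∈ H, h a = a) :
    {x : Ω | ∃ v ∈ V, v a = x}.Finite := by
  haveI : Finite (V ⧸ H.subgroupOf V) := by
    rw [Subgroup.relIndex] at hind
    exact Nat.finite_of_card_ne_zero hind
  have key : ∀ v₁ v₂ : V, QuotientGroup.leftRel (H.subgroupOf V) v₁ v₂ →
      (v₁ : Equiv.Perm Ω) a = (v₂ : Equiv.Perm Ω) a := by
    intro v₁ v₂ h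
    rw [QuotientGroup.leftRel_apply] at h
    have : ((v₁⁻¹ * v₂ : V) : Equiv.Perm Ω) a = a := ha _ h
    have := congrArg (v₁ : Equiv.Perm Ω) this
    simpa using this.symm
  let f : V ⧸ H.subgroupOf V → Ω := Quotient.lift (fun v : V => (v : Equiv.Perm Ω) a) key
  have hsub : {x : Ω | ∃ v ∈ V, v a = x} ⊆ Set.range f := by
    rintro x ⟨v, hv, rfl⟩
    exact ⟨QuotientGroup.mk (⟨v, hv⟩ : V), rfl⟩
  exact (Set.finite_range f).subset hsub

/-- If a fixed-point-free closed permutation group `G` has no algebraicity and weakly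
eliminates imaginaries, then every open subgroup of `G` lies between the pointwise and the
setwise stabilizer of a unique finite subset. -/
theorem open_subgroups_between_stabilizers_of_noAlg_wei
    (Ω : Type*) [Countable Ω] [Infinite Ω] (G : Subgroup (Equiv.Perm Ω))
    (hGcl : IsClosed[permTopology Ω] (G : Set (Equiv.Perm Ω)))
    (hnofix : ¬ ∃ ω : Ω, ∀ g ∈ G, g ω = ω)
    (hnoalg : ∀ (A : Finset Ω) (b : Ω), b ∉ A →
      {x : Ω | ∃ g ∈ G ⊓ fixSubgroup A, g b = x}.Infinite)
    (hwei : ∀ V : Subgroup (Equiv.Perm Ω), V ≤ G →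
      (∃ U : Set (Equiv.Perm Ω), IsOpen[permTopology Ω] U ∧ (V : Set (Equiv.Perm Ω)) = U ∩ G) →
      ∃ A : Finset Ω, G ⊓ fixSubgroup A ≤ V ∧ (G ⊓ fixSubgroup A).relIndex V ≠ 0) :
    ∀ V : Subgroup (Equiv.Perm Ω), V ≤ G →
      (∃ U : Set (Equiv.Perm Ω), IsOpen[permTopology Ω] U ∧ (V : Set (Equiv.Perm Ω)) = U ∩ G) →
      ∃! A : Finset Ω, G ⊓ fixSubgroup A ≤ V ∧ V ≤ G ⊓ setwiseStab A := by
  intro V hVG hVopen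
  obtain ⟨A, hAle, hAind⟩ := hwei V hVG hVopen
  have horbfin : ∀ a ∈ A, {x : Ω | ∃ v ∈ V, v a = x}.Finite := fun a haA =>
    orbit_finite_of_relindex_ne_zero V (G ⊓ fixSubgroup A) hAind a
      (fun h hh => hh.2 a haA)
  have horbinf : ∀ b : Ω, b ∉ A → {x : Ω | ∃ v ∈ V, v b = x}.Infinite := fun b hb =>
    (hnoalg A b hb).mono (fun x hx => hx.elim fun g hg => ⟨g, hAle hg.1, hg.2⟩)
  -- uniqueness helper: if G ⊓ fix B ≤ V ≤ G ⊓ setwise C then C ⊆ B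
  have huniq : ∀ B C : Finset Ω, G ⊓ fixSubgroup B ≤ V → V ≤ G ⊓ setwiseStab C →
      C ⊆ B := by
    intro B C hB hC a haC
    by_contra haB
    have hinf := hnoalg B a haB
    have hsubC : {x : Ω | ∃ g ∈ G ⊓ fixSubgroup B, g a = x} ⊆ (C : Set Ω) := by
      rintro x ⟨g, hg, rfl⟩
      exact ((hC (hB hg)).2 a).mp haC
    exact hinf (C.finite_toSet.subset hsubC)
  have hVsetA : V ≤ G ⊓ setwiseStab A := by
    intro v hv
    refine ⟨hVG hv, fun a => ⟨?_, ?_⟩⟩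
    · intro haA
      by_contra hva
      refine horbinf _ hva ((horbfin a haA).subset ?_)
      rintro x ⟨w, hw, rfl⟩
      exact ⟨w * v, mul_mem hw hv, rfl⟩
    · intro hva
      by_contra ha
      refine horbinf a ha ((horbfin _ hva).subset ?_)
      rintro x ⟨w, hw, rfl⟩
      refine ⟨w * v⁻¹, mul_mem hw (inv_mem hv), ?_⟩
      simp [Equiv.Perm.mul_apply]
  refine ⟨A, ⟨hAle, hVsetA⟩, ?_⟩
  rintro A' ⟨hA'le, hA'set⟩
  exact Finset.Subset.antisymm (huniq A A' hAle hA'set) (huniq A' A hA'le hVsetA)
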